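/- arXiv:quant-ph/0106132 — 5 statements merged into one kernel-verified Lean document; each statement's English description precedes it below -/
import Mathlib

section
/- In a complete state property space: for all p, q ∈ Σ we have p ≺ q if and only if s(p) ≺ s(q), and for all a, b ∈ L we have a ≺ b if and only if t(a) ≺ t(b). -/
/-- In a complete state property space, with `s p` the property state
of `p` (characterized by `s p ∈ ξ q ↔ ξ p ⊆ ξ q`) and `t a` the state property of `a`
(characterized by `t a ∈ κ b ↔ κ a ⊆ κ b`): `p ≺ q ↔ s p ≺ s q` and `a ≺ b ↔ t a ≺ t b`,
where the state implication is `p ≺ q ↔ ξ q ⊆ ξ p` and the property implication is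
`a ≺ b ↔ κ a ⊆ κ b`. -/
theorem property_state_and_state_property_preserve_implication
    {St Pr : Type*} (ξ : St → Set Pr) (κ : Pr → Set St)
    (h : ∀ (p : St) (a : Pr), a ∈ ξ p ↔ p ∈ κ a)
    (s : St → Pr) (hs : ∀ p q : St, s p ∈ ξ q ↔ ξ p ⊆ ξ q)
    (t : Pr → St) (ht : ∀ a b : Pr, t a ∈ κ b ↔ κ a ⊆ κ b) :
    (∀ p q : St, ξ q ⊆ ξ p ↔ κ (s p) ⊆ κ (s q)) ∧
    (∀ a b : Pr, κ a ⊆ κ b ↔ ξ (t b) ⊆ ξ (t a)) := by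
  constructor
  · intro p q
    constructor
    · intro hqp r hr
      rw [← h] at hr ⊢
      exact (hs q r).2 (hqp.trans ((hs p r).1 hr))
    · intro hk
      have hp : p ∈ κ (s p) := (h p (s p)).1 ((hs p p).2 subset_rfl)
      exact (hs q p).1 ((h p (s q)).2 (hk hp))
  · intro a b
    constructor
    · intro hab c hc
      rw [h] at hc ⊢
      exact (ht a c).2 (hab.trans ((ht b c).1 hc))
    · intro hx
      have hb : b ∈ ξ (t b) := (h (t b) b).2 ((ht b b).2 subset_rfl)
      exact (ht a b).1 ((h (t a) b).1 (hx hb))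
end

section
/- In a complete state property space: for every family (a_i)_{i∈I} of properties, the state t(∧_i a_i) is an infimum of the family (t(a_i))_{i∈I} with respect to the state implication pre-order (it satisfies t(∧_i a_i) ≺ t(a_k) for every k, and every state q with q ≺ t(a_k) for all k satisfies q ≺ t(∧_i a_i)); and for every family (p_j)_{j∈J} of states, the property s(∨_j p_j) is a supremum of the family (s(p_j))_{j∈J} with respect to the property implication pre-order. -/
/-- In a complete state property space, with `s` and `t` the property state
and state property maps: for every family `(aᵢ)` of properties with meet property `m`,
the state `t m` is an infimum of the family `(t (aᵢ))` with respect to the state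
implication pre-order (`p ≺ q` iff `ξ q ⊆ ξ p`); and for every family `(pⱼ)` of states
with join state `v`, the property `s v` is a supremum of the family `(s (pⱼ))` with
respect to the property implication pre-order (`a ≺ b` iff `κ a ⊆ κ b`). -/
theorem t_of_meet_is_infimum_and_s_of_join_is_supremum
    {St Pr : Type*} (ξ : St → Set Pr) (κ : Pr → Set St)
    (h : ∀ (p : St) (a : Pr), a ∈ ξ p ↔ p ∈ κ a)
    (s : St → Pr) (hs : ∀ p q : St, s p ∈ ξ q ↔ ξ p ⊆ ξ q)
    (t : Pr → St) (ht : ∀ a b : Pr, t a ∈ κ b ↔ κ a ⊆ κ b) :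
    (∀ {ι : Type*} (a : ι → Pr) (m : Pr),
      (∀ p : St, m ∈ ξ p ↔ ∀ i, a i ∈ ξ p) →
      (∀ k : ι, ξ (t (a k)) ⊆ ξ (t m)) ∧
      (∀ q : St, (∀ k : ι, ξ (t (a k)) ⊆ ξ q) → ξ (t m) ⊆ ξ q)) ∧
    (∀ {ι : Type*} (p : ι → St) (v : St),
      (∀ a : Pr, v ∈ κ a ↔ ∀ j, p j ∈ κ a) →
      (∀ l : ι, κ (s (p l)) ⊆ κ (s v)) ∧
      (∀ b : Pr, (∀ l : ι, κ (s (p l)) ⊆ κ b) → κ (s v) ⊆ κ b)) := by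
  have hxit : ∀ a b : Pr, b ∈ ξ (t a) ↔ κ a ⊆ κ b := by
    intro a b; rw [h, ht]
  have hkts : ∀ p q : St, q ∈ κ (s p) ↔ ξ p ⊆ ξ q := by
    intro p q; rw [← h, hs]
  constructor
  · intro ι a m hm
    have hsub : ∀ k, κ m ⊆ κ (a k) := by
      intro k p hp
      exact (h p (a k)).mp ((hm p).mp ((h p m).mpr hp) k)
    constructor
    · intro k b hb
      exact (hxit m b).mpr (hsub k |>.trans ((hxit (a k) b).mp hb))
    · intro q hq b hb
      have ha : ∀ k, a k ∈ ξ q := fun k =>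
        hq k ((hxit (a k) (a k)).mpr subset_rfl)
      have hmq : q ∈ κ m := (h q m).mp ((hm q).mpr ha)
      exact (h q b).mpr ((hxit m b).mp hb hmq)
  · intro ι p v hv
    have hsub : ∀ l, ξ v ⊆ ξ (p l) := by
      intro l b hb
      exact (h (p l) b).mpr ((hv b).mp ((h v b).mp hb) l)
    constructor
    · intro l q hq
      exact (hkts v q).mpr ((hsub l).trans ((hkts (p l) q).mp hq))
    · intro b hb q hq
      have hp : ∀ l, p l ∈ κ b := fun l =>
        hb l ((hkts (p l) (p l)).mpr subset_rfl)
      have hvb : b ∈ ξ v := (h v b).mpr ((hv b).mpr hp)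
      exact (h q b).mp ((hkts v q).mp hq hvb)
end

section
/- In a complete state property space: for every p ∈ Σ, ξ(p) = {a ∈ L | s(p) ≺ a}, and for every a ∈ L, κ(a) = {p ∈ Σ | p ≺ t(a)}. -/
/-- In a complete state property space, for every state `p`,
`ξ p = {a | s p ≺ a}` (i.e. `{a | κ (s p) ⊆ κ a}`), and for every property `a`,
`κ a = {p | p ≺ t a}` (i.e. `{p | ξ (t a) ⊆ ξ p}`). -/
theorem xi_and_kappa_are_intervals
    {St Pr : Type*} (ξ : St → Set Pr) (κ : Pr → Set St)
    (h : ∀ (p : St) (a : Pr), a ∈ ξ p ↔ p ∈ κ a)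
    (s : St → Pr) (hs : ∀ p q : St, s p ∈ ξ q ↔ ξ p ⊆ ξ q)
    (t : Pr → St) (ht : ∀ a b : Pr, t a ∈ κ b ↔ κ a ⊆ κ b) :
    (∀ p : St, ξ p = {a : Pr | κ (s p) ⊆ κ a}) ∧
    (∀ a : Pr, κ a = {p : St | ξ (t a) ⊆ ξ p}) := by
  constructor
  · intro p
    ext a
    constructor
    · intro ha q hq
      exact (h q a).mp (((hs p q).mp ((h q (s p)).mpr hq)) ha)
    · intro hk
      exact (h p a).mpr (hk ((h p (s p)).mp ((hs p p).mpr (fun _ hx => hx))))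
  · intro a
    ext p
    constructor
    · intro hp b hb
      exact (h p b).mpr (((ht a b).mp ((h (t a) b).mp hb)) hp)
    · intro hk
      exact (h p a).mp (hk ((h (t a) a).mpr ((ht a a).mpr fun _ hx => hx)))
end

section
/- Let (Σ, L, ξ, κ) be a state property system in which the lattice order coincides with property implication (for all a, b ∈ L: a ≤ b ↔ κ(a) ⊆ κ(b)), and for p ∈ Σ let s(p) := ⨅_{a ∈ ξ(p)} a. Then s maps the set of atomic states onto the set of atoms of L: (1) if p is an atomic state then s(p) is an atom of L; (2) for every atom a of L there exists an atomic state p with s(p) = a. -/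
/-- In a state property system whose complete-lattice order coincides
with property implication (`a ≤ b ↔ κ a ⊆ κ b`), the map `s : p ↦ ⨅_{a ∈ ξ p} a = sInf (ξ p)`
maps the set of atomic states onto the set of atoms of the property lattice:
(1) if `p` is an atomic state (every `q ≺ p` satisfies `q ≈ p`, i.e. every `q` with
`ξ p ⊆ ξ q` has `ξ q = ξ p`) then `sInf (ξ p)` is an atom;
(2) every atom `a` is of the form `sInf (ξ p)` for some atomic state `p`. -/
theorem atomic_states_map_onto_atoms
    {St Pr : Type*} [CompleteLattice Pr]
    (ξ : St → Set Pr) (κ : Pr → Set St)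
    (h : ∀ (p : St) (a : Pr), a ∈ ξ p ↔ p ∈ κ a)
    (hOrd : ∀ a b : Pr, a ≤ b ↔ κ a ⊆ κ b)
    (hTop : ∀ p : St, ⊤ ∈ ξ p) (hBot : ∀ p : St, ⊥ ∉ ξ p)
    (hMeet : ∀ (A : Set Pr) (p : St), (∀ a ∈ A, a ∈ ξ p) ↔ sInf A ∈ ξ p) :
    (∀ p : St, (∀ q : St, ξ p ⊆ ξ q → ξ q = ξ p) → IsAtom (sInf (ξ p))) ∧
    (∀ a : Pr, IsAtom a →
      ∃ p : St, (∀ q : St, ξ p ⊆ ξ q → ξ q = ξ p) ∧ sInf (ξ p) = a) := by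
  -- s(p) ∈ ξ p
  have hs : ∀ p : St, sInf (ξ p) ∈ ξ p := fun p =>
    (hMeet (ξ p) p).mp (fun a ha => ha)
  -- ξ p is upward closed
  have hup : ∀ (p : St) (a b : Pr), a ∈ ξ p → a ≤ b → b ∈ ξ p := by
    intro p a b ha hab
    exact (h p b).mpr ((hOrd a b).mp hab ((h p a).mp ha))
  -- membership characterization: a ∈ ξ p ↔ sInf (ξ p) ≤ a
  have hmem : ∀ (p : St) (a : Pr), a ∈ ξ p ↔ sInf (ξ p) ≤ a := by
    intro p a
    constructor
    · exact fun ha => sInf_le ha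
    · exact fun hle => hup p _ a (hs p) hle
  -- κ of ⊥ is empty, so b ≠ ⊥ → κ b nonempty
  have hne : ∀ b : Pr, b ≠ ⊥ → ∃ q : St, b ∈ ξ q := by
    intro b hb
    by_contra hc
    push_neg at hc
    apply hb
    have : κ b ⊆ κ ⊥ := by
      intro q hq
      exact absurd ((h q b).mpr hq) (hc q)
    exact le_bot_iff.mp ((hOrd b ⊥).mpr this)
  -- s(p) ≠ ⊥
  have hsbot : ∀ p : St, sInf (ξ p) ≠ ⊥ := by
    intro p hp
    exact hBot p (hp ▸ hs p)
  constructor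
  · intro p hatomic
    constructor
    · exact hsbot p
    · intro b hb
      by_contra hbb
      obtain ⟨q, hq⟩ := hne b hbb
      have hqp : sInf (ξ q) ≤ sInf (ξ p) :=
        le_trans ((hmem q b).mp hq) (le_of_lt hb)
      have hsub : ξ p ⊆ ξ q := by
        intro a ha
        exact (hmem q a).mpr (le_trans hqp ((hmem p a).mp ha))
      have : ξ q = ξ p := hatomic q hsub
      have heq : sInf (ξ q) = sInf (ξ p) := by rw [this]
      have : b = sInf (ξ p) :=
        le_antisymm (le_of_lt hb) (heq ▸ (hmem q b).mp hq)
      exact absurd (this ▸ hb) (lt_irrefl _)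
  · intro a ha
    obtain ⟨p, hp⟩ := hne a ha.1
    have hspa : sInf (ξ p) = a := by
      rcases eq_or_lt_of_le ((hmem p a).mp hp) with heq | hlt
      · exact heq
      · exact absurd (ha.2 _ hlt) (hsbot p)
    refine ⟨p, ?_, hspa⟩
    intro q hsub
    have hqp : sInf (ξ q) ≤ sInf (ξ p) := sInf_le_sInf hsub
    have hsq : sInf (ξ q) = a := by
      rcases eq_or_lt_of_le (hqp.trans_eq hspa) with heq | hlt
      · exact heq
      · exact absurd (ha.2 _ hlt) (hsbot q)
    ext b
    rw [hmem q b, hmem p b, hsq, hspa]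
end

section
/- Let L₁ and L₂ be complete atomistic lattices and let L₁ ∐ L₂ be their coproduct. If L₁ ∐ L₂ satisfies the covering law, then L₁ is trivial (every element of L₁ equals ⊥₁ or ⊤₁) or L₂ is trivial (every element of L₂ equals ⊥₂ or ⊤₂). Consequently, for two nontrivial entities the property lattice of their minimal compound entity never satisfies the covering law. -/
lemma exists_two_atoms {L : Type*} [CompleteLattice L] [IsAtomistic L]
    (x : L) (hb : x ≠ ⊥) (ht : x ≠ ⊤) :
    ∃ p q : L, IsAtom p ∧ IsAtom q ∧ ¬ q ≤ p := by
  have h1 : ∃ p : L, IsAtom p ∧ p ≤ x := by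
    by_contra h
    push_neg at h
    have : sSup { a : L | IsAtom a ∧ a ≤ x } = ⊥ := by
      apply sSup_eq_bot.2
      rintro a ⟨ha, hax⟩
      exact absurd hax (h a ha)
    rw [sSup_atoms_le_eq] at this
    exact hb this
  obtain ⟨p, hp, hpx⟩ := h1
  have h2 : ∃ q : L, IsAtom q ∧ ¬ q ≤ x := by
    by_contra h
    push_neg at h
    have : (⊤ : L) ≤ x := by
      rw [← sSup_atoms_eq_top]
      exact sSup_le fun a ha => h a ha
    exact ht (top_le_iff.1 this)
  obtain ⟨q, hq, hqx⟩ := h2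
  exact ⟨p, q, hp, hq, fun hle => hqx (hle.trans hpx)⟩

/-- Let `L₁`, `L₂` be complete atomistic lattices and let `L₁ ∐ L₂` be
their coproduct (realized as `WithBot` of the pairs with nonbottom components, ordered
componentwise with an added bottom `0`). If `L₁ ∐ L₂` satisfies the covering law
(for every atom `c` and elements `a`, `b` with `a ⊓ c = ⊥` — i.e. `⊥` is the greatest
lower bound of `{a, c}` — and `a ≤ b ≤ a ⊔ c` — where `a ⊔ c` is a least upper bound `s`
of `{a, c}` — one has `b = a` or `b = s`), then `L₁` is trivial or `L₂` is trivial. -/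
theorem coprod_covering_law_implies_trivial_factor {L₁ L₂ : Type*}
    [CompleteLattice L₁] [CompleteLattice L₂]
    [IsAtomistic L₁] [IsAtomistic L₂]
    (hcov : ∀ c a b s : WithBot {x : L₁ × L₂ // x.1 ≠ ⊥ ∧ x.2 ≠ ⊥},
      IsAtom c → IsGLB {a, c} ⊥ → IsLUB {a, c} s → a ≤ b → b ≤ s →
      b = a ∨ b = s) :
    (∀ x : L₁, x = ⊥ ∨ x = ⊤) ∨ (∀ x : L₂, x = ⊥ ∨ x = ⊤) := by
  by_contra hcon
  push_neg at hcon
  obtain ⟨⟨x₁, hx₁b, hx₁t⟩, ⟨x₂, hx₂b, hx₂t⟩⟩ := hcon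
  obtain ⟨p₁, q₁, hp₁, hq₁, hqp₁⟩ := exists_two_atoms x₁ hx₁b hx₁t
  obtain ⟨p₂, q₂, hp₂, hq₂, hqp₂⟩ := exists_two_atoms x₂ hx₂b hx₂t
  set T := {x : L₁ × L₂ // x.1 ≠ ⊥ ∧ x.2 ≠ ⊥}
  have hpq₁ : p₁ ⊓ q₁ = ⊥ := by
    rcases hq₁.le_iff.1 (inf_le_right : p₁ ⊓ q₁ ≤ q₁) with h | h
    · exact h
    · exact absurd (h ▸ (inf_le_left : p₁ ⊓ q₁ ≤ p₁)) hqp₁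
  have hqp₂' : q₂ ⊓ p₂ = ⊥ := by
    rcases hq₂.le_iff.1 (inf_le_left : q₂ ⊓ p₂ ≤ q₂) with h | h
    · exact h
    · exact absurd (h ▸ (inf_le_right : q₂ ⊓ p₂ ≤ p₂)) hqp₂
  let c : WithBot T := (⟨(q₁, q₂), hq₁.1, hq₂.1⟩ : T)
  let a : WithBot T := (⟨(p₁, p₂), hp₁.1, hp₂.1⟩ : T)
  let s : WithBot T := (⟨(p₁ ⊔ q₁, p₂ ⊔ q₂), fun h => hp₁.1 (le_bot_iff.1 (h ▸ le_sup_left)),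
      fun h => hp₂.1 (le_bot_iff.1 (h ▸ le_sup_left))⟩ : T)
  let b : WithBot T := (⟨(p₁ ⊔ q₁, p₂), fun h => hp₁.1 (le_bot_iff.1 (h ▸ le_sup_left)), hp₂.1⟩ : T)
  have hc : IsAtom c := by
    constructor
    · exact WithBot.coe_ne_bot
    · intro z hz
      induction z using WithBot.recBotCoe with
      | bot => rfl
      | coe y =>
        exfalso
        have hle := le_of_lt hz
        rw [WithBot.coe_le_coe] at hle
        have e1 : y.1.1 = q₁ := (hq₁.le_iff.1 hle.1).resolve_left y.2.1
        have e2 : y.1.2 = q₂ := (hq₂.le_iff.1 hle.2).resolve_left y.2.2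
        apply ne_of_lt hz
        exact congrArg _ (Subtype.ext (Prod.ext e1 e2))
  have hglb : IsGLB {a, c} (⊥ : WithBot T) := by
    constructor
    · intro z hz; exact bot_le
    · intro z hz
      have hza : z ≤ a := hz (Set.mem_insert _ _)
      have hzc : z ≤ c := hz (Set.mem_insert_of_mem _ rfl)
      induction z using WithBot.recBotCoe with
      | bot => exact le_refl _
      | coe y =>
        obtain ⟨⟨y₁, y₂⟩, hy₁, hy₂⟩ := y
        rw [WithBot.coe_le_coe] at hza hzc
        have : y₁ ≤ p₁ ⊓ q₁ := le_inf hza.1 hzc.1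
        rw [hpq₁] at this
        exact absurd (le_bot_iff.1 this) hy₁
  have hlub : IsLUB {a, c} s := by
    constructor
    · rintro z (rfl | rfl)
      · exact WithBot.coe_le_coe.2 ⟨le_sup_left, le_sup_left⟩
      · exact WithBot.coe_le_coe.2 ⟨le_sup_right, le_sup_right⟩
    · intro z hz
      have hza : a ≤ z := hz (Set.mem_insert _ _)
      have hzc : c ≤ z := hz (Set.mem_insert_of_mem _ rfl)
      induction z using WithBot.recBotCoe with
      | bot => exact absurd (le_bot_iff.1 hza) WithBot.coe_ne_bot
      | coe y =>
        obtain ⟨⟨y₁, y₂⟩, hy₁, hy₂⟩ := y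
        rw [WithBot.coe_le_coe] at hza hzc
        exact WithBot.coe_le_coe.2 ⟨sup_le hza.1 hzc.1, sup_le hza.2 hzc.2⟩
  have hab : a ≤ b := WithBot.coe_le_coe.2 ⟨le_sup_left, le_refl _⟩
  have hbs : b ≤ s := WithBot.coe_le_coe.2 ⟨le_refl _, le_sup_left⟩
  rcases hcov c a b s hc hglb hlub hab hbs with h | h
  · have : p₁ ⊔ q₁ = p₁ := by
      have := WithBot.coe_inj.1 h
      exact congrArg (fun t : T => t.1.1) this
    exact hqp₁ (le_sup_right.trans this.le)
  · have : p₂ = p₂ ⊔ q₂ := by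
      have := WithBot.coe_inj.1 h
      exact congrArg (fun t : T => t.1.2) this
    exact hqp₂ (le_sup_right.trans this.ge)
end
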